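/- (One-round continuous difference update of the Simon-like round function, per bit position) Let U, V be independent uniformly distributed Boolean random variables, and let D_a, D_b, D_c, D_y be Boolean random variables such that U, V, D_a, D_b, D_c, D_y are mutually independent, with continuous differences c_a, c_b, c_c, c_y respectively. Define D_out = ((U ∧ V) ⊕ ((U ⊕ D_a) ∧ (V ⊕ D_b))) ⊕ D_c ⊕ D_y. Then E[(−1)^{D_out}] = (1/4)·(1 + c_a + c_b + c_a·c_b) · c_c · c_y. -/

import Mathlib

open MeasureTheory ProbabilityTheory

/-- The continuous difference (correlation) `E[(-1)^D]` of a Boolean random variable. -/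
noncomputable def cdiff {Ω : Type*} [MeasurableSpace Ω] (μ : Measure Ω) (D : Ω → Bool) : ℝ :=
  ∫ ω, (if D ω then (-1 : ℝ) else 1) ∂μ

noncomputable def bchar : Bool → ℝ := fun b => if b then (-1 : ℝ) else 1

lemma integral_finset_prod_indep {Ω : Type*} [MeasurableSpace Ω] {μ : Measure Ω}
    [IsProbabilityMeasure μ] {R : Fin 6 → Ω → ℝ}
    (hR : iIndepFun R μ) (hm : ∀ i, Measurable (R i)) :
    ∀ s : Finset (Fin 6), ∫ ω, ∏ j ∈ s, R j ω ∂μ = ∏ j ∈ s, ∫ ω, R j ω ∂μ := by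
  intro s
  classical
  induction s using Finset.induction_on with
  | empty => simp
  | @insert i s hi ih =>
    have hIndep : IndepFun (R i) (∏ j ∈ s, R j) μ :=
      (hR.indepFun_finsetProd_of_notMem hm hi).symm
    have hpe : (∏ j ∈ s, R j) = fun ω => ∏ j ∈ s, R j ω := by
      funext ω; simp [Finset.prod_apply]
    have hprodmeas : Measurable (∏ j ∈ s, R j) := by
      rw [hpe]; exact Finset.measurable_prod s (fun j _ => hm j)
    have hmul := hIndep.integral_mul_eq_mul_integral (hm i).aestronglyMeasurable
      hprodmeas.aestronglyMeasurable
    simp only [Finset.prod_insert hi]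
    rw [← ih]
    calc ∫ ω, R i ω * ∏ j ∈ s, R j ω ∂μ
        = integral μ (R i * ∏ j ∈ s, R j) := by
          congr 1; funext ω; simp [Finset.prod_apply]
      _ = (∫ ω, R i ω ∂μ) * integral μ (∏ j ∈ s, R j) := hmul
      _ = (∫ ω, R i ω ∂μ) * ∫ ω, ∏ j ∈ s, R j ω ∂μ := by rw [hpe]

lemma integral_bchar_uniform {Ω : Type*} [MeasurableSpace Ω] {μ : Measure Ω}
    [IsProbabilityMeasure μ] {W : Ω → Bool} (hW : Measurable W)
    (huni : ∀ bv : Bool, μ {ω | W ω = bv} = 1 / 2) :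
    ∫ ω, bchar (W ω) ∂μ = 0 := by
  have hset : MeasurableSet {ω | W ω = true} := hW (measurableSet_singleton true)
  have hfun : (fun ω => bchar (W ω))
      = fun ω => 1 - 2 * Set.indicator {ω | W ω = true} (fun _ => (1:ℝ)) ω := by
    funext ω
    by_cases h : W ω = true
    · simp [bchar, h, Set.indicator_apply, Set.mem_setOf_eq]; norm_num
    · have h' : W ω = false := by simpa using h
      simp [bchar, h', Set.indicator_apply, Set.mem_setOf_eq]
  rw [hfun, integral_sub (integrable_const 1)
    (((integrable_const (1:ℝ)).indicator hset).const_mul 2),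
    integral_const, integral_const_mul, integral_indicator_const _ hset, measureReal_def, measureReal_def, huni true]
  simp [ENNReal.toReal_div]

theorem continuous_difference_round_function {Ω : Type*} [MeasurableSpace Ω]
    (μ : Measure Ω) [IsProbabilityMeasure μ]
    (U V Da Db Dc Dy : Ω → Bool)
    (hU : Measurable U) (hV : Measurable V)
    (hDa : Measurable Da) (hDb : Measurable Db)
    (hDc : Measurable Dc) (hDy : Measurable Dy)
    (hindep : iIndepFun ![U, V, Da, Db, Dc, Dy] μ)
    (hUuni : ∀ bv : Bool, μ {ω | U ω = bv} = 1 / 2)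
    (hVuni : ∀ bv : Bool, μ {ω | V ω = bv} = 1 / 2) :
    cdiff μ (fun ω =>
        xor (xor (U ω && V ω) ((xor (U ω) (Da ω)) && (xor (V ω) (Db ω))))
          (xor (Dc ω) (Dy ω)))
      = (1 / 4) * (1 + cdiff μ Da + cdiff μ Db + cdiff μ Da * cdiff μ Db)
          * cdiff μ Dc * cdiff μ Dy := by
  classical
  set X : Fin 6 → Ω → Bool := ![U, V, Da, Db, Dc, Dy] with hX
  have hXm : ∀ i, Measurable (X i) := by
    intro i; fin_cases i <;> simpa [X]
  set R : Fin 6 → Ω → ℝ := fun i => bchar ∘ X i with hRdef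
  have hRindep : iIndepFun R μ :=
    hindep.comp (fun _ => bchar) (fun _ => measurable_of_countable _)
  have hRm : ∀ i, Measurable (R i) :=
    fun i => (measurable_of_countable bchar).comp (hXm i)
  have hprod := integral_finset_prod_indep hRindep hRm
  have hR0 : ∀ ω, R 0 ω = bchar (U ω) := fun _ => rfl
  have hR1 : ∀ ω, R 1 ω = bchar (V ω) := fun _ => rfl
  have hR2 : ∀ ω, R 2 ω = bchar (Da ω) := fun _ => rfl
  have hR3 : ∀ ω, R 3 ω = bchar (Db ω) := fun _ => rfl
  have hR4 : ∀ ω, R 4 ω = bchar (Dc ω) := fun _ => rfl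
  have hR5 : ∀ ω, R 5 ω = bchar (Dy ω) := fun _ => rfl
  have hI0 : ∫ ω, R 0 ω ∂μ = 0 := by
    simp only [hR0]; exact integral_bchar_uniform hU hUuni
  have hI1 : ∫ ω, R 1 ω ∂μ = 0 := by
    simp only [hR1]; exact integral_bchar_uniform hV hVuni
  have hI2 : ∫ ω, R 2 ω ∂μ = cdiff μ Da := by simp only [hR2]; rfl
  have hI3 : ∫ ω, R 3 ω ∂μ = cdiff μ Db := by simp only [hR3]; rfl
  have hI4 : ∫ ω, R 4 ω ∂μ = cdiff μ Dc := by simp only [hR4]; rfl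
  have hI5 : ∫ ω, R 5 ω ∂μ = cdiff μ Dy := by simp only [hR5]; rfl
  set M : Finset (Fin 6) → Ω → ℝ := fun s ω => ∏ j ∈ s, R j ω with hM
  set sets : Fin 16 → Finset (Fin 6) :=
    ![{4,5}, {0,2,4,5}, {1,3,4,5}, {0,1,2,3,4,5},
      {0,4,5}, {2,4,5}, {0,1,3,4,5}, {1,2,3,4,5},
      {1,4,5}, {0,1,2,4,5}, {3,4,5}, {0,2,3,4,5},
      {0,1,4,5}, {1,2,4,5}, {0,3,4,5}, {2,3,4,5}] with hsets
  set sgn : Fin 16 → ℝ :=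
    ![1,1,1,-1, 1,1,1,-1, 1,1,1,-1, -1,-1,-1,1] with hsgn
  have hpt : (fun ω => (if xor (xor (U ω && V ω)
        ((xor (U ω) (Da ω)) && (xor (V ω) (Db ω)))) (xor (Dc ω) (Dy ω))
        then (-1:ℝ) else 1))
      = fun ω => 4⁻¹ * ∑ k : Fin 16, sgn k * M (sets k) ω := by
    funext ω
    simp only [hM, hsets, hsgn, Fin.sum_univ_succ, Fin.sum_univ_zero]
    simp (config := { decide := true }) only [Matrix.cons_val_zero, Matrix.cons_val_one,
      Matrix.head_cons, Matrix.cons_val_succ, Finset.prod_insert, Finset.prod_singleton,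
      Finset.mem_insert, Finset.mem_singleton]
    simp only [hR0, hR1, hR2, hR3, hR4, hR5]
    cases U ω <;> cases V ω <;> cases Da ω <;> cases Db ω <;> cases Dc ω <;> cases Dy ω <;>
      norm_num [bchar]
  have hMint : ∀ s : Finset (Fin 6), Integrable (M s) μ := by
    intro s
    have hmeas : Measurable (M s) := Finset.measurable_prod s (fun j _ => hRm j)
    refine (integrable_const (1:ℝ)).mono' hmeas.aestronglyMeasurable ?_
    refine Filter.Eventually.of_forall (fun ω => ?_)
    have : ‖M s ω‖ = ∏ j ∈ s, ‖R j ω‖ := by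
      simp [hM, Finset.abs_prod]
    rw [this]
    have hone : ∀ j ∈ s, ‖R j ω‖ = 1 := by
      intro j _
      rcases Bool.eq_false_or_eq_true (X j ω) with h | h <;>
        simp [hRdef, Function.comp, bchar, h]
    rw [Finset.prod_congr rfl hone]
    simp
  have key : cdiff μ (fun ω =>
        xor (xor (U ω && V ω) ((xor (U ω) (Da ω)) && (xor (V ω) (Db ω))))
          (xor (Dc ω) (Dy ω)))
      = 4⁻¹ * ∑ k : Fin 16, sgn k * ∏ j ∈ sets k, ∫ ω, R j ω ∂μ := by
    unfold cdiff
    rw [hpt, integral_const_mul, integral_finset_sum _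
      (fun k _ => (hMint (sets k)).const_mul (sgn k))]
    congr 1
    refine Finset.sum_congr rfl (fun k _ => ?_)
    rw [integral_const_mul, hprod (sets k)]
  rw [key]
  simp only [hsets, hsgn, Fin.sum_univ_succ, Fin.sum_univ_zero]
  simp [Finset.prod_insert, Finset.prod_singleton, hI0, hI1, hI2, hI3, hI4, hI5]
  ring
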